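/- arXiv:1306.6018 — 2 statements merged into one kernel-verified Lean document; each statement's English description precedes it below -/
import Mathlib

section
/- There exists an automorphism ψ of the symmetric group S_6 with ψ((1 2)) = (1 6)(3 4)(2 5) and ψ((1 2 3 4 5 6)) = (1 3 4)(2 6), and any such automorphism is not inner. -/
/-- The permutation `(1 6)(3 4)(2 5)` of `{1,…,6}` (0-based: `(0 5)(2 3)(1 4)`). -/
def psiOfSwap : Equiv.Perm (Fin 6) :=
  Equiv.swap 0 5 * Equiv.swap 2 3 * Equiv.swap 1 4

/-- The permutation `(1 3 4)(2 6)` of `{1,…,6}` (0-based: `(0 2 3)(1 5)`). -/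
def psiOfCycle : Equiv.Perm (Fin 6) :=
  Equiv.swap 0 2 * Equiv.swap 2 3 * Equiv.swap 1 5

open Equiv

/-- The type of (codings of) 1-factorizations of the complete graph on 6 vertices. -/
abbrev FacType := Finset (Finset (Finset (Fin 6)))

/-- The six 1-factorizations of `K₆`, in a carefully chosen order. -/
def fac : Fin 6 → FacType :=
  ![ {{{0,1},{2,4},{3,5}}, {{0,2},{1,5},{3,4}}, {{0,3},{1,2},{4,5}}, {{0,4},{1,3},{2,5}}, {{0,5},{1,4},{2,3}}},
     {{{0,1},{2,3},{4,5}}, {{0,2},{1,5},{3,4}}, {{0,3},{1,4},{2,5}}, {{0,4},{1,2},{3,5}}, {{0,5},{1,3},{2,4}}},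
     {{{0,1},{2,5},{3,4}}, {{0,2},{1,3},{4,5}}, {{0,3},{1,5},{2,4}}, {{0,4},{1,2},{3,5}}, {{0,5},{1,4},{2,3}}},
     {{{0,1},{2,5},{3,4}}, {{0,2},{1,4},{3,5}}, {{0,3},{1,2},{4,5}}, {{0,4},{1,5},{2,3}}, {{0,5},{1,3},{2,4}}},
     {{{0,1},{2,3},{4,5}}, {{0,2},{1,4},{3,5}}, {{0,3},{1,5},{2,4}}, {{0,4},{1,3},{2,5}}, {{0,5},{1,2},{3,4}}},
     {{{0,1},{2,4},{3,5}}, {{0,2},{1,3},{4,5}}, {{0,3},{1,4},{2,5}}, {{0,4},{1,5},{2,3}}, {{0,5},{1,2},{3,4}}} ]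

/-- The action of a permutation of the vertices on factorizations. -/
def act (σ : Equiv.Perm (Fin 6)) (A : FacType) : FacType :=
  A.image (Finset.image (Finset.image σ))

lemma act_act (σ τ : Equiv.Perm (Fin 6)) (A : FacType) :
    act σ (act τ A) = act (σ * τ) A := by
  simp only [act, Finset.image_image]
  congr 1
  funext m
  simp only [Function.comp_apply, Finset.image_image]
  congr 1
  funext e
  simp only [Function.comp_apply, Finset.image_image]
  congr 1

lemma act_one (A : FacType) : act 1 A = A := by
  simp only [act, Equiv.Perm.coe_one]
  have h1 : Finset.image (id : Fin 6 → Fin 6) = id := funext fun s => Finset.image_id (s := s)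
  rw [h1]
  have h2 : Finset.image (id : Finset (Fin 6) → Finset (Fin 6)) = id :=
    funext fun s => Finset.image_id (s := s)
  rw [h2, Finset.image_id]

/-- Index lookup for the six factorizations. -/
def gidx (A : FacType) : Fin 6 :=
  if A = fac 0 then 0 else if A = fac 1 then 1 else if A = fac 2 then 2
  else if A = fac 3 then 3 else if A = fac 4 then 4 else 5

lemma gidx_fac : ∀ j : Fin 6, gidx (fac j) = j := by decide

/-- The subgroup of permutations which permute the six factorizations. -/
def Sg : Subgroup (Equiv.Perm (Fin 6)) where
  carrier := {σ | ∃ π : Equiv.Perm (Fin 6), ∀ i, act σ (fac i) = fac (π i)}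
  one_mem' := ⟨1, fun i => by simp [act_one]⟩
  mul_mem' := by
    rintro σ τ ⟨π, hπ⟩ ⟨ρ, hρ⟩
    exact ⟨π * ρ, fun i => by rw [← act_act, hρ, hπ]; rfl⟩
  inv_mem' := by
    rintro σ ⟨π, hπ⟩
    refine ⟨π⁻¹, fun i => ?_⟩
    have h := hπ (π⁻¹ i)
    rw [show π (π⁻¹ i) = i from π.apply_symm_apply i] at h
    rw [← h, act_act, inv_mul_cancel, act_one]

lemma swap_mem_Sg : Equiv.swap (0 : Fin 6) 1 ∈ Sg := ⟨psiOfSwap, by decide⟩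

lemma rotate_mem_Sg : finRotate 6 ∈ Sg := ⟨psiOfCycle, by decide⟩

lemma Sg_eq_top : Sg = ⊤ := by
  have h1 : (finRotate 6).IsCycle := isCycle_finRotate
  have h2 : (finRotate 6).support = Finset.univ := support_finRotate
  have h := Equiv.Perm.closure_cycle_adjacent_swap h1 h2 0
  have hswap : Equiv.swap (0 : Fin 6) (finRotate 6 0) = Equiv.swap 0 1 := by decide
  rw [hswap] at h
  rw [eq_top_iff, ← h, Subgroup.closure_le]
  rintro x (rfl | rfl)
  · exact rotate_mem_Sg
  · exact swap_mem_Sg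

/-- The underlying function of the outer automorphism. -/
def mfun (σ : Equiv.Perm (Fin 6)) (i : Fin 6) : Fin 6 := gidx (act σ (fac i))

lemma fac_mfun (σ : Equiv.Perm (Fin 6)) (i : Fin 6) : fac (mfun σ i) = act σ (fac i) := by
  have hσ : σ ∈ Sg := by rw [Sg_eq_top]; trivial
  obtain ⟨π, hπ⟩ := hσ
  rw [mfun, hπ, gidx_fac]

lemma mfun_mul (σ τ : Equiv.Perm (Fin 6)) (i : Fin 6) :
    mfun (σ * τ) i = mfun σ (mfun τ i) := by
  rw [mfun, ← act_act, ← fac_mfun τ i]; rfl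

lemma mfun_one (i : Fin 6) : mfun 1 i = i := by rw [mfun, act_one, gidx_fac]

/-- The outer automorphism as a bare function to permutations. -/
def P (σ : Equiv.Perm (Fin 6)) : Equiv.Perm (Fin 6) where
  toFun := mfun σ
  invFun := mfun σ⁻¹
  left_inv := fun i => by rw [← mfun_mul, inv_mul_cancel, mfun_one]
  right_inv := fun i => by rw [← mfun_mul, mul_inv_cancel, mfun_one]

lemma P_apply (σ : Equiv.Perm (Fin 6)) (i : Fin 6) : P σ i = mfun σ i := rfl

lemma P_mul (σ τ : Equiv.Perm (Fin 6)) : P (σ * τ) = P σ * P τ := by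
  apply Equiv.ext
  intro i
  simp only [Equiv.Perm.mul_apply, P_apply]
  exact mfun_mul σ τ i

lemma P_one : P 1 = 1 := by
  apply Equiv.ext
  intro i
  simp only [Equiv.Perm.one_apply, P_apply]
  exact mfun_one i

lemma P_inv (σ : Equiv.Perm (Fin 6)) : P σ⁻¹ = (P σ)⁻¹ := by
  rw [eq_inv_iff_mul_eq_one, ← P_mul, inv_mul_cancel, P_one]

/-- The element by which `P ∘ P` is conjugation. -/
def wconj : Equiv.Perm (Fin 6) :=
  Equiv.swap 0 2 * Equiv.swap 2 3 * Equiv.swap 3 4 * Equiv.swap 4 1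

/-- The subgroup on which `P ∘ P` agrees with conjugation by `wconj`. -/
def Kg : Subgroup (Equiv.Perm (Fin 6)) where
  carrier := {σ | P (P σ) = wconj * σ * wconj⁻¹}
  one_mem' := by simp [P_one]
  mul_mem' := by
    intro σ τ hσ hτ
    simp only [Set.mem_setOf_eq] at *
    rw [P_mul, P_mul, hσ, hτ]
    group
  inv_mem' := by
    intro σ hσ
    simp only [Set.mem_setOf_eq] at *
    rw [P_inv, P_inv, hσ]
    group

lemma swap_mem_Kg : Equiv.swap (0 : Fin 6) 1 ∈ Kg := by
  show P (P (Equiv.swap (0 : Fin 6) 1)) = _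
  exact Equiv.ext fun i => by revert i; decide

lemma rotate_mem_Kg : finRotate 6 ∈ Kg := by
  show P (P (finRotate 6)) = _
  exact Equiv.ext fun i => by revert i; decide

lemma Kg_eq_top : Kg = ⊤ := by
  have h1 : (finRotate 6).IsCycle := isCycle_finRotate
  have h2 : (finRotate 6).support = Finset.univ := support_finRotate
  have h := Equiv.Perm.closure_cycle_adjacent_swap h1 h2 0
  have hswap : Equiv.swap (0 : Fin 6) (finRotate 6 0) = Equiv.swap 0 1 := by decide
  rw [hswap] at h
  rw [eq_top_iff, ← h, Subgroup.closure_le]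
  rintro x (rfl | rfl)
  · exact rotate_mem_Kg
  · exact swap_mem_Kg

lemma PP_eq (σ : Equiv.Perm (Fin 6)) : P (P σ) = wconj * σ * wconj⁻¹ := by
  have hσ : σ ∈ Kg := by rw [Kg_eq_top]; trivial
  exact hσ

lemma P_injective : Function.Injective P := by
  intro σ τ h
  have := congrArg P h
  rw [PP_eq, PP_eq] at this
  exact mul_left_cancel (mul_right_cancel this)

lemma P_bijective : Function.Bijective P :=
  Finite.injective_iff_bijective.mp P_injective

/-- The outer automorphism. -/
noncomputable def ψ₀ : MulAut (Equiv.Perm (Fin 6)) :=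
  { Equiv.ofBijective P P_bijective with map_mul' := P_mul }

lemma ψ₀_apply (σ : Equiv.Perm (Fin 6)) : ψ₀ σ = P σ := rfl

/-- There exists an automorphism `ψ` of `S₆` with `ψ((1 2)) = (1 6)(3 4)(2 5)` and
`ψ((1 2 3 4 5 6)) = (1 3 4)(2 6)`, and any such automorphism is not inner. -/
theorem outer_automorphism_of_S6 :
    (∃ ψ : MulAut (Equiv.Perm (Fin 6)),
      ψ (Equiv.swap 0 1) = psiOfSwap ∧ ψ (finRotate 6) = psiOfCycle) ∧
    ∀ ψ : MulAut (Equiv.Perm (Fin 6)),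
      ψ (Equiv.swap 0 1) = psiOfSwap → ψ (finRotate 6) = psiOfCycle →
      ∀ g : Equiv.Perm (Fin 6), ψ ≠ MulAut.conj g := by
  constructor
  · refine ⟨ψ₀, ?_, ?_⟩
    · rw [ψ₀_apply]
      exact Equiv.ext fun i => by revert i; decide
    · rw [ψ₀_apply]
      exact Equiv.ext fun i => by revert i; decide
  · intro ψ hs _ g hcontra
    have h1 : ψ (Equiv.swap 0 1) = g * Equiv.swap 0 1 * g⁻¹ := by
      rw [hcontra, MulAut.conj_apply]
    rw [hs] at h1
    have h2 : psiOfSwap.support.card = (g * Equiv.swap 0 1 * g⁻¹).support.card := by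
      rw [h1]
    rw [Equiv.Perm.support_conj, Finset.card_map,
      Equiv.Perm.card_support_swap (by decide : (0 : Fin 6) ≠ 1)] at h2
    have : psiOfSwap.support.card = 6 := by decide
    omega
end

section
/- Let x_1, x_2, x_3, x_4, α be elements of a commutative ring satisfying 64·s_4 = (α + 4·s_2 − s_1²)², where s_i denotes the i-th elementary symmetric polynomial in x_1,…,x_4. Set D_1 = (x_1−x_2)(x_3−x_4) and D_2 = (x_1−x_3)(x_2−x_4). Then 16·(D_1² − D_1·D_2 + D_2²) = 3α² − 6(s_1² − 4s_2)·α + 3s_1⁴ − 24·s_1²·s_2 − 48·s_1·s_3 + 64·s_2². -/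
/-- If `x₁, …, x₄, α` in a commutative ring satisfy the Igusa quartic relation
`64·s₄ = (α + 4s₂ − s₁²)²`, then with `D₁ = (x₁−x₂)(x₃−x₄)`, `D₂ = (x₁−x₃)(x₂−x₄)` one has
`16(D₁² − D₁D₂ + D₂²) = 3α² − 6(s₁² − 4s₂)α + 3s₁⁴ − 24s₁²s₂ − 48s₁s₃ + 64s₂²`. -/
theorem weight_eight_relation (R : Type*) [CommRing R] (x₁ x₂ x₃ x₄ α : R)
    (h : 64 * (x₁ * x₂ * x₃ * x₄) =
      (α + 4 * (x₁ * x₂ + x₁ * x₃ + x₁ * x₄ + x₂ * x₃ + x₂ * x₄ + x₃ * x₄) -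
        (x₁ + x₂ + x₃ + x₄) ^ 2) ^ 2) :
    16 * (((x₁ - x₂) * (x₃ - x₄)) ^ 2 -
        ((x₁ - x₂) * (x₃ - x₄)) * ((x₁ - x₃) * (x₂ - x₄)) +
        ((x₁ - x₃) * (x₂ - x₄)) ^ 2) =
      3 * α ^ 2 -
        6 * ((x₁ + x₂ + x₃ + x₄) ^ 2 -
          4 * (x₁ * x₂ + x₁ * x₃ + x₁ * x₄ + x₂ * x₃ + x₂ * x₄ + x₃ * x₄)) * α +
        3 * (x₁ + x₂ + x₃ + x₄) ^ 4 -
        24 * (x₁ + x₂ + x₃ + x₄) ^ 2 *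
          (x₁ * x₂ + x₁ * x₃ + x₁ * x₄ + x₂ * x₃ + x₂ * x₄ + x₃ * x₄) -
        48 * (x₁ + x₂ + x₃ + x₄) *
          (x₁ * x₂ * x₃ + x₁ * x₂ * x₄ + x₁ * x₃ * x₄ + x₂ * x₃ * x₄) +
        64 * (x₁ * x₂ + x₁ * x₃ + x₁ * x₄ + x₂ * x₃ + x₂ * x₄ + x₃ * x₄) ^ 2 := by
  linear_combination 3 * h
end
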